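/- Let R be a commutative noetherian ring, I, J ideals of R, M a finitely generated R-module, and N an arbitrary R-module. Then Γ_{I,J}(Hom_R(M,N)) = Hom_R(M, Γ_{I,J}(N)); that is, an R-linear map f : M → N satisfies I^n f ⊆ J f for some positive integer n if and only if f(x) ∈ Γ_{I,J}(N) for every x ∈ M. -/

import Mathlib

open CategoryTheory

section GammaDefs

variable {R : Type} [CommRing R]

lemma gammaIJ_aux {M : Type} [AddCommGroup M] [Module R M] (I J : Ideal R) (x : M) (n : ℕ) :
    (∀ a ∈ I ^ n, ∃ j ∈ J, a • x = j • x) ↔ I ^ n ≤ Ideal.torsionOf R M x ⊔ J := by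
  constructor
  · intro h a ha
    obtain ⟨j, hj, hja⟩ := h a ha
    exact Submodule.mem_sup.2 ⟨a - j, by simp [Ideal.mem_torsionOf_iff, sub_smul, hja],
      j, hj, by ring⟩
  · intro h a ha
    obtain ⟨s, hs, j, hj, hsj⟩ := Submodule.mem_sup.1 (h ha)
    refine ⟨j, hj, ?_⟩
    rw [← hsj, add_smul, (Ideal.mem_torsionOf_iff _ _).1 hs, zero_add]

/-- The `(I,J)`-torsion submodule: elements `x` such that `I^n x ⊆ J x` for some `n > 0`. -/
def gammaIJ (I J : Ideal R) (M : Type) [AddCommGroup M] [Module R M] : Submodule R M where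
  carrier := {x | ∃ n : ℕ, 0 < n ∧ ∀ a ∈ I ^ n, ∃ j ∈ J, a • x = j • x}
  zero_mem' := ⟨1, one_pos, fun a _ => ⟨0, J.zero_mem, by simp⟩⟩
  add_mem' := by
    rintro x y ⟨n, hn, hx⟩ ⟨m, hm, hy⟩
    refine ⟨n + m, by omega, (gammaIJ_aux I J _ _).2 ?_⟩
    rw [pow_add]
    refine le_trans (Ideal.mul_mono ((gammaIJ_aux I J _ _).1 hx) ((gammaIJ_aux I J _ _).1 hy))
      (Ideal.mul_le.2 ?_)
    rintro a ha b hb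
    obtain ⟨s, hs, j, hj, rfl⟩ := Submodule.mem_sup.1 ha
    obtain ⟨t, ht, j', hj', rfl⟩ := Submodule.mem_sup.1 hb
    rw [Ideal.mem_torsionOf_iff] at hs ht
    refine Submodule.mem_sup.2 ⟨s * t, ?_, s * j' + j * t + j * j',
      J.add_mem (J.add_mem (J.mul_mem_left s hj') (J.mul_mem_right t hj)) (J.mul_mem_left j hj'),
      by ring⟩
    have h1 : (s * t) • x = 0 := by rw [mul_comm, mul_smul, hs, smul_zero]
    have h2 : (s * t) • y = 0 := by rw [mul_smul, ht, smul_zero]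
    rw [Ideal.mem_torsionOf_iff, smul_add, h1, h2, add_zero]
  smul_mem' := by
    rintro r x ⟨n, hn, hx⟩
    refine ⟨n, hn, fun a ha => ?_⟩
    obtain ⟨j, hj, hja⟩ := hx a ha
    exact ⟨j, hj, by rw [smul_comm, hja, smul_comm]⟩

/-- The `I`-torsion submodule: elements killed by a power of `I`. -/
def gammaI (I : Ideal R) (M : Type) [AddCommGroup M] [Module R M] : Submodule R M where
  carrier := {x | ∃ n : ℕ, 0 < n ∧ ∀ a ∈ I ^ n, a • x = 0}
  zero_mem' := ⟨1, one_pos, fun a _ => smul_zero a⟩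
  add_mem' := by
    rintro x y ⟨n, hn, hx⟩ ⟨m, hm, hy⟩
    refine ⟨n + m, by omega, fun a ha => ?_⟩
    rw [smul_add, hx a (Ideal.pow_le_pow_right (by omega) ha),
      hy a (Ideal.pow_le_pow_right (by omega) ha), add_zero]
  smul_mem' := by
    rintro r x ⟨n, hn, hx⟩
    exact ⟨n, hn, fun a ha => by rw [smul_comm, hx a ha, smul_zero]⟩

end GammaDefs



lemma gammaIJ_prod_aux {R : Type} [CommRing R] (I J : Ideal R) {α : Type}
    (s : Finset α) (A : α → Ideal R) (n : α → ℕ)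
    (h : ∀ x ∈ s, I ^ n x ≤ A x ⊔ J) :
    I ^ (∑ x ∈ s, n x) ≤ s.inf A ⊔ J := by
  classical
  induction s using Finset.induction with
  | empty => simp
  | @insert a s ha ih =>
    rw [Finset.sum_insert ha, pow_add, Finset.inf_insert]
    refine le_trans (Ideal.mul_mono (h a (Finset.mem_insert_self a s))
      (ih fun x hx => h x (Finset.mem_insert_of_mem hx))) ?_
    rw [Ideal.sup_mul, Ideal.mul_sup, Ideal.mul_sup]
    refine sup_le (sup_le ?_ ?_) (sup_le ?_ ?_)
    · exact le_sup_of_le_left (le_inf Ideal.mul_le_left Ideal.mul_le_right)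
    · exact le_sup_of_le_right Ideal.mul_le_right
    · exact le_sup_of_le_right Ideal.mul_le_left
    · exact le_sup_of_le_right Ideal.mul_le_left

/-- Theorem 2.2: for finitely generated `M`,
`Γ_{I,J}(Hom_R(M,N)) = Hom_R(M, Γ_{I,J}(N))`. -/
theorem gammaIJ_hom_eq (R : Type) [CommRing R] [IsNoetherianRing R] (I J : Ideal R)
    (M N : Type) [AddCommGroup M] [Module R M] [Module.Finite R M]
    [AddCommGroup N] [Module R N] (f : M →ₗ[R] N) :
    f ∈ gammaIJ I J (M →ₗ[R] N) ↔ ∀ x : M, f x ∈ gammaIJ I J N := by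
  constructor
  · rintro ⟨n, hn, h⟩ x
    refine ⟨n, hn, fun a ha => ?_⟩
    obtain ⟨j, hj, hja⟩ := h a ha
    exact ⟨j, hj, by simpa using DFunLike.congr_fun hja x⟩
  · intro h
    obtain ⟨s, hs⟩ := Module.Finite.fg_top (R := R) (M := M)
    choose n hn hx using h
    have key : ∀ x ∈ s, I ^ n x ≤ Ideal.torsionOf R N (f x) ⊔ J :=
      fun x _ => (gammaIJ_aux I J (f x) (n x)).1 (hx x)
    refine ⟨max 1 (∑ x ∈ s, n x), lt_of_lt_of_le one_pos (le_max_left _ _),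
      (gammaIJ_aux I J f _).2 ?_⟩
    refine le_trans (Ideal.pow_le_pow_right (le_max_right _ _)) ?_
    refine le_trans (gammaIJ_prod_aux I J s _ n key) (sup_le_sup_right ?_ J)
    intro r hr
    rw [Ideal.mem_torsionOf_iff]
    have hker : (⊤ : Submodule R M) ≤ LinearMap.ker (r • f) := by
      rw [← hs]
      refine Submodule.span_le.2 fun x hxs => ?_
      have := (Ideal.mem_torsionOf_iff _ _).1
        ((Finset.inf_le hxs : s.inf (fun x => Ideal.torsionOf R N (f x)) ≤ _) hr)
      simpa [LinearMap.mem_ker] using this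
    ext y
    simpa [LinearMap.mem_ker] using hker (Submodule.mem_top (x := y))
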